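/- Let G be a bridgeless cubic graph, let {e1, e2} be a 2-edge-cut of G with components H1, H2 of G − {e1, e2}, and let G1 = H1 + e'1 and G2 = H2 + e'2 be the graphs obtained by the {e1, e2}-reduction. Suppose {f1, f2, f3} is a 3-edge-cut of G with f1, f2 ∈ E(H1) and f3 ∈ E(H2). Then {f3, e'2} is a 2-edge-cut of G2 and {f1, f2, e'1} is a 3-edge-cut of G1. -/
import Mathlib

open SimpleGraph

/-- Transfer reachability along a vertex map whose edge images are reachable. -/
lemma reach_transfer {V W : Type*} {A : SimpleGraph V} {B : SimpleGraph W} (f : V → W)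
    (h : ∀ a b, A.Adj a b → B.Reachable (f a) (f b)) {x y : V}
    (hr : A.Reachable x y) : B.Reachable (f x) (f y) := by
  obtain ⟨w⟩ := hr
  induction w with
  | nil => exact Reachable.refl _
  | cons ha p ih => exact (h _ _ ha).trans ih

/-- Reachable targets stay in an adjacency-closed set. -/
lemma mem_of_reach_closed {V : Type*} {A : SimpleGraph V} {P : Set V}
    (h : ∀ a b, A.Adj a b → a ∈ P → b ∈ P) {x y : V}
    (hr : A.Reachable x y) (hx : x ∈ P) : y ∈ P := by
  obtain ⟨w⟩ := hr
  induction w with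
  | nil => exact hx
  | cons ha p ih => exact ih (h _ _ ha hx)

lemma sym2_exists_rep {α : Type*} (e : Sym2 α) : ∃ a b, e = s(a, b) :=
  Sym2.ind (fun a b => ⟨a, b, rfl⟩) e

/-- Walks in `D` ending at a vertex of `S` give reachability in a graph `K` on `S`, up to
entering through one of the two gateway vertices. -/
lemma reach_side_aux {V : Type*} (D : SimpleGraph V) (S : Set V) (K : SimpleGraph ↥S)
    (hK : ∀ (a b : V) (ha : a ∈ S) (hb : b ∈ S), D.Adj a b → K.Adj ⟨a, ha⟩ ⟨b, hb⟩)
    (w1 w2 : ↥S)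
    (hcross : ∀ a b, D.Adj a b → a ∉ S → b ∈ S → b = ↑w1 ∨ b = ↑w2)
    (z v : V) (p : D.Walk z v) :
    ∀ hv : v ∈ S,
    (∀ hz : z ∈ S, K.Reachable ⟨z, hz⟩ ⟨v, hv⟩ ∨ K.Reachable w1 ⟨v, hv⟩ ∨
        K.Reachable w2 ⟨v, hv⟩) ∧
      (z ∉ S → K.Reachable w1 ⟨v, hv⟩ ∨ K.Reachable w2 ⟨v, hv⟩) := by
  induction p with
  | nil =>
    intro hv
    exact ⟨fun hz => Or.inl (Reachable.refl _), fun hz => absurd hv hz⟩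
  | @cons x t _ ha p ih =>
    intro hv
    constructor
    · intro hz
      by_cases ht : t ∈ S
      · rcases (ih hv).1 ht with h1 | h1 | h1
        · exact Or.inl ((hK _ _ hz ht ha).reachable.trans h1)
        · exact Or.inr (Or.inl h1)
        · exact Or.inr (Or.inr h1)
      · exact Or.inr ((ih hv).2 ht)
    · intro hz
      by_cases ht : t ∈ S
      · rcases hcross x t ha hz ht with he | he
        · rcases (ih hv).1 ht with h1 | h1 | h1
          · exact Or.inl (by
              rwa [show (⟨t, ht⟩ : ↥S) = w1 from Subtype.ext he] at h1)
          · exact Or.inl h1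
          · exact Or.inr h1
        · rcases (ih hv).1 ht with h1 | h1 | h1
          · exact Or.inr (by
              rwa [show (⟨t, ht⟩ : ↥S) = w2 from Subtype.ext he] at h1)
          · exact Or.inl h1
          · exact Or.inr h1
      · exact (ih hv).2 ht

lemma reach_side {V : Type*} (D : SimpleGraph V) (S : Set V) (K : SimpleGraph ↥S)
    (hK : ∀ (a b : V) (ha : a ∈ S) (hb : b ∈ S), D.Adj a b → K.Adj ⟨a, ha⟩ ⟨b, hb⟩)
    (w1 w2 : ↥S)
    (hcross : ∀ a b, D.Adj a b → a ∉ S → b ∈ S → b = ↑w1 ∨ b = ↑w2)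
    (z : V) (w : ↥S) (h : D.Reachable z ↑w) :
    (∀ hz : z ∈ S, K.Reachable ⟨z, hz⟩ w ∨ K.Reachable w1 w ∨ K.Reachable w2 w) ∧
      (z ∉ S → K.Reachable w1 w ∨ K.Reachable w2 w) := by
  obtain ⟨p⟩ := h
  have := reach_side_aux D S K hK w1 w2 hcross z (↑w) p w.2
  rwa [show (⟨(w : V), w.2⟩ : ↥S) = w from Subtype.ext rfl] at this

/-- Core lemma: if `G - T` is connected, every edge of `F \ T` avoids `S`, and some pair
`c, d` in `S` is separated in `G - F`, then every vertex of `S` reaches one of the two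
gateway vertices in the graph `K` induced on `S` by `G - F`. -/
lemma gateway {V : Type*} (G : SimpleGraph V) (F T : Set (Sym2 V))
    (hconnT : (G.deleteEdges T).Connected)
    (S : Set V) (K : SimpleGraph ↥S)
    (hK : ∀ (a b : V) (ha : a ∈ S) (hb : b ∈ S),
      (G.deleteEdges F).Adj a b → K.Adj ⟨a, ha⟩ ⟨b, hb⟩)
    (hK' : ∀ (a b : ↥S), K.Adj a b → (G.deleteEdges F).Adj ↑a ↑b)
    (w1 w2 : ↥S)
    (hcross : ∀ a b, (G.deleteEdges F).Adj a b → a ∉ S → b ∈ S → b = ↑w1 ∨ b = ↑w2)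
    (hTout : ∀ e ∈ F, e ∉ T → ∀ c ∈ e, c ∉ S)
    (c d : ↥S) (hcd : ¬ (G.deleteEdges F).Reachable ↑c ↑d)
    (z : ↥S) : K.Reachable z w1 ∨ K.Reachable z w2 := by
  by_contra h
  push_neg at h
  obtain ⟨hz1, hz2⟩ := h
  set D := G.deleteEdges F with hD
  have hKD : ∀ a b : ↥S, K.Reachable a b → D.Reachable ↑a ↑b := fun a b h =>
    reach_transfer Subtype.val (fun a b hab => (hK' a b hab).reachable) h
  have key : ∀ m : ↥S, ¬ K.Reachable z m → False := by
    intro m hzm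
    have hDzm : ¬ D.Reachable ↑z ↑m := by
      intro hr
      have := (reach_side D S K hK w1 w2 hcross ↑m z hr.symm).1 m.2
      rw [Subtype.coe_eta] at this
      rcases this with h | h | h
      · exact hzm h.symm
      · exact hz1 h.symm
      · exact hz2 h.symm
    have hclosed : ∀ a b, (G.deleteEdges T).Adj a b →
        a ∈ {x | D.Reachable ↑z x} → b ∈ {x | D.Reachable ↑z x} := by
      intro a b hab hza
      rcases em (s(a, b) ∈ F) with hF | hF
      · exfalso
        have haS : a ∉ S :=
          hTout _ hF ((deleteEdges_adj.mp hab).2) a (Sym2.mem_mk_left a b)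
        have := (reach_side D S K hK w1 w2 hcross a z hza.symm).2 haS
        rcases this with h | h
        · exact hz1 h.symm
        · exact hz2 h.symm
      · exact Reachable.trans hza
          (SimpleGraph.Adj.reachable (by
            rw [hD, deleteEdges_adj]
            exact ⟨(deleteEdges_adj.mp hab).1, hF⟩))
    exact hDzm (mem_of_reach_closed hclosed (hconnT.preconnected ↑z ↑m) (Reachable.refl _))
  have hm : ¬ K.Reachable z c ∨ ¬ K.Reachable z d := by
    by_contra hmm
    push_neg at hmm
    exact hcd (hKD c d ((hmm.1.symm).trans hmm.2))
  rcases hm with h | h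
  · exact key c h
  · exact key d h

lemma sym2_val_eq {α : Type*} {S : Set α} {a b : ↥S} {f : Sym2 ↥S}
    (h : s((a : α), (b : α)) = f.map Subtype.val) : s(a, b) = f :=
  Sym2.map.injective Subtype.coe_injective (by rw [Sym2.map_pair_eq]; exact h)

lemma sym2_val_eq' {α : Type*} {S : Set α} {a b : ↥S} {f : Sym2 ↥S}
    (h : s(a, b) = f) : s((a : α), (b : α)) = f.map Subtype.val := by
  rw [← h, Sym2.map_pair_eq]

/-- Combine: every vertex reaches a gateway, the gateways are joined. -/
lemma assemble_conn {α : Type*} {S : Set α} (K B : SimpleGraph ↥S) (w1 w2 : ↥S)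
    (hKB : ∀ a b : ↥S, K.Adj a b → B.Adj a b) (hww : B.Reachable w1 w2)
    (hLC : ∀ z : ↥S, K.Reachable z w1 ∨ K.Reachable z w2) : B.Preconnected := by
  have lift : ∀ a b : ↥S, K.Reachable a b → B.Reachable a b := fun a b h =>
    reach_transfer id (fun a b h => (hKB a b h).reachable) h
  have hx : ∀ x : ↥S, B.Reachable x w1 := by
    intro x
    rcases hLC x with h | h
    · exact lift _ _ h
    · exact (lift _ _ h).trans hww.symm
  exact fun x y => (hx x).trans (hx y).symm

/-- Join the two gateways through a `B`-edge `c-d` whose endpoints lie in different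
`K`-components. -/
lemma hub_conn {α : Type*} {S : Set α} (K B : SimpleGraph ↥S) (w1 w2 c d : ↥S)
    (hKB : ∀ a b : ↥S, K.Adj a b → B.Adj a b) (hcd : B.Adj c d)
    (hncd : ¬ K.Reachable c d)
    (hLC : ∀ z : ↥S, K.Reachable z w1 ∨ K.Reachable z w2) : B.Reachable w1 w2 := by
  have lift : ∀ a b : ↥S, K.Reachable a b → B.Reachable a b := fun a b h =>
    reach_transfer id (fun a b h => (hKB a b h).reachable) h
  rcases hLC c with h1 | h1 <;> rcases hLC d with h2 | h2
  · exact absurd (h1.trans h2.symm) hncd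
  · exact ((lift _ _ h1).symm.trans hcd.reachable).trans (lift _ _ h2)
  · exact ((lift _ _ h2).symm.trans hcd.reachable.symm).trans (lift _ _ h1)
  · exact absurd (h1.trans h2.symm) hncd
/-- A graph is cubic if every vertex has degree `3`. -/
def IsCubic {V : Type*} (G : SimpleGraph V) : Prop :=
  ∀ v : V, (G.neighborSet v).ncard = 3

/-- A graph is bridgeless if it has no bridge. -/
def Bridgeless {V : Type*} (G : SimpleGraph V) : Prop :=
  ∀ e : Sym2 V, ¬ G.IsBridge e

/-- `S` is a set of edges of `G` whose deletion disconnects `G`. -/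
def IsDisconnectingSet {V : Type*} (G : SimpleGraph V) (S : Set (Sym2 V)) : Prop :=
  S ⊆ G.edgeSet ∧ ¬ (G.deleteEdges S).Connected

/-- A `k`-edge-cut: an inclusion-minimal set of `k` edges whose deletion disconnects `G`. -/
def IsKEdgeCut {V : Type*} (G : SimpleGraph V) (k : ℕ) (S : Set (Sym2 V)) : Prop :=
  S.ncard = k ∧ IsDisconnectingSet G S ∧ ∀ T : Set (Sym2 V), T ⊂ S → ¬ IsDisconnectingSet G T

/-- A perfect matching of `G`, as a set of edges such that every vertex is incident with
exactly one edge of the set. -/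
def IsPerfectMatchingSet {V : Type*} (G : SimpleGraph V) (M : Set (Sym2 V)) : Prop :=
  M ⊆ G.edgeSet ∧ ∀ v : V, ∃! e : Sym2 V, e ∈ M ∧ v ∈ e

/-- A well-spread perfect matching: a perfect matching containing exactly one edge of every
`3`-edge-cut. -/
def IsWellSpreadPM {V : Type*} (G : SimpleGraph V) (M : Set (Sym2 V)) : Prop :=
  IsPerfectMatchingSet G M ∧ ∀ C : Set (Sym2 V), IsKEdgeCut G 3 C → (M ∩ C).ncard = 1

/-- A graph is `3`-edge-connected if it is connected, has at least two vertices, and stays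
connected after deleting any set of fewer than `3` edges. -/
def ThreeEdgeConnected {V : Type*} [Fintype V] (G : SimpleGraph V) : Prop :=
  G.Connected ∧ 1 < Fintype.card V ∧
    ∀ S : Set (Sym2 V), S.ncard < 3 → (G.deleteEdges S).Connected

/-- If `{f1, f2, f3}` is a `3`-edge-cut of `G` with `f1, f2` edges of `H1` and
`f3` an edge of `H2`, then `{f3, e'2}` is a `2`-edge-cut of `G2` and `{f1, f2, e'1}` is a
`3`-edge-cut of `G1`. -/
theorem reduction_split_three_cut {V : Type*} [Fintype V] [DecidableEq V] (G : SimpleGraph V)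
    (hconn : G.Connected) (hbl : Bridgeless G) (hcub : IsCubic G)
    (u1 v1 u2 v2 : V)
    (he1 : G.Adj u1 v1) (he2 : G.Adj u2 v2)
    (hcut : IsKEdgeCut G 2 {s(u1, v1), s(u2, v2)})
    (S1 S2 : Set V)
    (hS1 : S1 = {x | (G.deleteEdges {s(u1, v1), s(u2, v2)}).Reachable u1 x})
    (hS2 : S2 = {x | (G.deleteEdges {s(u1, v1), s(u2, v2)}).Reachable v1 x})
    (hu1 : u1 ∈ S1) (hu2 : u2 ∈ S1) (hv1 : v1 ∈ S2) (hv2 : v2 ∈ S2)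
    (hUnion : S1 ∪ S2 = Set.univ) (hDisj : Disjoint S1 S2)
    (huu : u1 ≠ u2) (hvv : v1 ≠ v2)
    (hnadj1 : ¬ G.Adj u1 u2) (hnadj2 : ¬ G.Adj v1 v2)
    (f1 f2 : Sym2 ↥S1) (f3 : Sym2 ↥S2)
    (hf1 : f1 ∈ (G.induce S1).edgeSet) (hf2 : f2 ∈ (G.induce S1).edgeSet)
    (hf3 : f3 ∈ (G.induce S2).edgeSet)
    (hcut3 : IsKEdgeCut G 3 {f1.map Subtype.val, f2.map Subtype.val, f3.map Subtype.val}) :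
    ∀ (G1 : SimpleGraph ↥S1) (G2 : SimpleGraph ↥S2),
      G1 = G.induce S1 ⊔ fromEdgeSet {s((⟨u1, hu1⟩ : ↥S1), (⟨u2, hu2⟩ : ↥S1))} →
      G2 = G.induce S2 ⊔ fromEdgeSet {s((⟨v1, hv1⟩ : ↥S2), (⟨v2, hv2⟩ : ↥S2))} →
      IsKEdgeCut G2 2 {f3, s((⟨v1, hv1⟩ : ↥S2), (⟨v2, hv2⟩ : ↥S2))} ∧
      IsKEdgeCut G1 3 {f1, f2, s((⟨u1, hu1⟩ : ↥S1), (⟨u2, hu2⟩ : ↥S1))} := by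
  intro G1 G2 hG1 hG2
  subst hG1
  subst hG2
  classical
  -- edge representatives
  obtain ⟨p1s, p2s, hf1r⟩ := sym2_exists_rep f1
  obtain ⟨q1s, q2s, hf2r⟩ := sym2_exists_rep f2
  obtain ⟨a3s, b3s, hf3r⟩ := sym2_exists_rep f3
  have hpG : G.Adj ↑p1s ↑p2s := by
    have h := hf1; rw [hf1r, mem_edgeSet] at h; exact h
  have hqG : G.Adj ↑q1s ↑q2s := by
    have h := hf2; rw [hf2r, mem_edgeSet] at h; exact h
  have haG : G.Adj ↑a3s ↑b3s := by
    have h := hf3; rw [hf3r, mem_edgeSet] at h; exact h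
  set eu : Sym2 ↥S1 := s((⟨u1, hu1⟩ : ↥S1), (⟨u2, hu2⟩ : ↥S1)) with heu
  set ev : Sym2 ↥S2 := s((⟨v1, hv1⟩ : ↥S2), (⟨v2, hv2⟩ : ↥S2)) with hev
  set F : Set (Sym2 V) :=
    {f1.map Subtype.val, f2.map Subtype.val, f3.map Subtype.val} with hFdef
  set D : SimpleGraph V := G.deleteEdges F with hDdef
  obtain ⟨hcard3, hdis3, hmin3⟩ := hcut3
  obtain ⟨hFsub, hDdisc⟩ := hdis3
  have hm1 : f1.map Subtype.val = s((p1s : V), (p2s : V)) := by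
    rw [hf1r, Sym2.map_pair_eq]
  have hm2 : f2.map Subtype.val = s((q1s : V), (q2s : V)) := by
    rw [hf2r, Sym2.map_pair_eq]
  have hm3 : f3.map Subtype.val = s((a3s : V), (b3s : V)) := by
    rw [hf3r, Sym2.map_pair_eq]
  have hdisjf : ∀ x : V, x ∈ S1 → x ∈ S2 → False := fun x h1 h2 =>
    Set.disjoint_left.mp hDisj h1 h2
  have memS2 : ∀ x : V, x ∉ S1 → x ∈ S2 := by
    intro x hx
    have hx2 : x ∈ S1 ∪ S2 := by rw [hUnion]; exact Set.mem_univ x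
    rcases hx2 with h | h
    · exact absurd h hx
    · exact h
  have memS1 : ∀ x : V, x ∉ S2 → x ∈ S1 := by
    intro x hx
    have hx2 : x ∈ S1 ∪ S2 := by rw [hUnion]; exact Set.mem_univ x
    rcases hx2 with h | h
    · exact h
    · exact absurd h hx
  have hdisj13 : ∀ (x : ↥S1) (y : ↥S2), (↑x : V) ≠ ↑y := fun x y h =>
    hdisjf _ x.2 (h ▸ y.2)
  -- only e1 e2 cross the cut
  have hcrossG : ∀ a b : V, a ∈ S1 → b ∈ S2 → G.Adj a b →
      s(a, b) = s(u1, v1) ∨ s(a, b) = s(u2, v2) := by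
    intro a b ha hb hab
    by_contra hno
    push_neg at hno
    have hadj : (G.deleteEdges {s(u1, v1), s(u2, v2)}).Adj a b :=
      deleteEdges_adj.mpr ⟨hab, by
        intro hmem
        rcases Set.mem_insert_iff.mp hmem with h | h
        · exact hno.1 h
        · exact hno.2 (Set.mem_singleton_iff.mp h)⟩
    have ha' : (G.deleteEdges {s(u1, v1), s(u2, v2)}).Reachable u1 a := by
      rw [hS1] at ha; exact ha
    have hb' : b ∈ S1 := by rw [hS1]; exact ha'.trans hadj.reachable
    exact hdisjf b hb' hb
  -- distinctness of the three cut edges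
  have hne12 : f1.map Subtype.val ≠ f2.map Subtype.val := by
    intro h
    have h3 : F.ncard = 3 := hcard3
    rw [hFdef, h, Set.insert_idem] at h3
    have h4 := Set.ncard_insert_le (f2.map Subtype.val) {f3.map Subtype.val}
    rw [h3, Set.ncard_singleton] at h4
    omega
  have hne13 : f1.map Subtype.val ≠ f3.map Subtype.val := by
    rw [hm1, hm3]
    intro h
    rcases Sym2.eq_iff.mp h with ⟨h1, _⟩ | ⟨h1, _⟩
    · exact hdisj13 p1s a3s h1
    · exact hdisj13 p1s b3s h1
  have hne23 : f2.map Subtype.val ≠ f3.map Subtype.val := by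
    rw [hm2, hm3]
    intro h
    rcases Sym2.eq_iff.mp h with ⟨h1, _⟩ | ⟨h1, _⟩
    · exact hdisj13 q1s a3s h1
    · exact hdisj13 q1s b3s h1
  have hmin : ∀ T : Set (Sym2 V), T ⊂ F → T ⊆ G.edgeSet →
      (G.deleteEdges T).Connected := by
    intro T hT hTE
    by_contra hc
    exact hmin3 T hT ⟨hTE, hc⟩
  -- separation of the endpoints of each cut edge in D
  have nfact : ∀ (g : Sym2 V) (c d : V), g ∈ F → g = s(c, d) → ¬ D.Reachable c d := by
    intro g c d hgF hg hreach
    have hT : F \ {g} ⊂ F := ⟨Set.diff_subset, fun hsup => ((hsup hgF).2 rfl)⟩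
    have hconnT := hmin _ hT (fun e he => hFsub he.1)
    apply hDdisc
    have hedge : ∀ a b : V, (G.deleteEdges (F \ {g})).Adj a b →
        D.Reachable (id a) (id b) := by
      intro a b hab
      have hab' := deleteEdges_adj.mp hab
      rcases em (s(a, b) = g) with he | he
      · rw [hg] at he
        rcases Sym2.eq_iff.mp he with ⟨h1, h2⟩ | ⟨h1, h2⟩
        · rw [h1, h2]; exact hreach
        · rw [h1, h2]; exact hreach.symm
      · exact (deleteEdges_adj.mpr ⟨hab'.1, fun hF' => hab'.2 ⟨hF', he⟩⟩).reachable
    rw [connected_iff] at hconnT ⊢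
    exact ⟨fun x y => reach_transfer id hedge (hconnT.1 x y), hconnT.2⟩
  have N1 : ¬ D.Reachable ↑p1s ↑p2s :=
    nfact _ _ _ (by rw [hFdef]; exact Set.mem_insert _ _) hm1
  have N2 : ¬ D.Reachable ↑q1s ↑q2s :=
    nfact _ _ _ (by rw [hFdef]; exact Set.mem_insert_of_mem _ (Set.mem_insert _ _)) hm2
  have N3 : ¬ D.Reachable ↑a3s ↑b3s :=
    nfact _ _ _
      (by rw [hFdef]; exact Set.mem_insert_of_mem _ (Set.mem_insert_of_mem _ rfl)) hm3
  -- the two side graphs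
  set K1 : SimpleGraph ↥S1 := (G.induce S1).deleteEdges {f1, f2} with hK1def
  set K2 : SimpleGraph ↥S2 := (G.induce S2).deleteEdges {f3} with hK2def
  have hK1a : ∀ (a b : V) (ha : a ∈ S1) (hb : b ∈ S1),
      D.Adj a b → K1.Adj ⟨a, ha⟩ ⟨b, hb⟩ := by
    intro a b ha hb hab
    have hab' := deleteEdges_adj.mp hab
    rw [hK1def]
    refine deleteEdges_adj.mpr ⟨hab'.1, ?_⟩
    intro hmem
    rcases Set.mem_insert_iff.mp hmem with h | h
    · refine hab'.2 ?_
      rw [hFdef]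
      exact Set.mem_insert_iff.mpr (Or.inl (sym2_val_eq' h))
    · refine hab'.2 ?_
      rw [hFdef]
      exact Set.mem_insert_of_mem _ (Set.mem_insert_iff.mpr
        (Or.inl (sym2_val_eq' (Set.mem_singleton_iff.mp h))))
  have hK1b : ∀ a b : ↥S1, K1.Adj a b → D.Adj ↑a ↑b := by
    intro a b hab
    rw [hK1def] at hab
    have hab' := deleteEdges_adj.mp hab
    refine deleteEdges_adj.mpr ⟨hab'.1, ?_⟩
    intro hmem
    rw [hFdef] at hmem
    rcases Set.mem_insert_iff.mp hmem with h | h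
    · exact hab'.2 (Set.mem_insert_iff.mpr (Or.inl (sym2_val_eq h)))
    · rcases Set.mem_insert_iff.mp h with h | h
      · exact hab'.2 (Set.mem_insert_of_mem _
          (Set.mem_singleton_iff.mpr (sym2_val_eq h)))
      · rw [Set.mem_singleton_iff, hm3] at h
        rcases Sym2.eq_iff.mp h with ⟨h1, _⟩ | ⟨h1, _⟩
        · exact hdisj13 a a3s h1
        · exact hdisj13 a b3s h1
  have hK2a : ∀ (a b : V) (ha : a ∈ S2) (hb : b ∈ S2),
      D.Adj a b → K2.Adj ⟨a, ha⟩ ⟨b, hb⟩ := by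
    intro a b ha hb hab
    have hab' := deleteEdges_adj.mp hab
    rw [hK2def]
    refine deleteEdges_adj.mpr ⟨hab'.1, ?_⟩
    intro hmem
    refine hab'.2 ?_
    rw [hFdef]
    exact Set.mem_insert_of_mem _ (Set.mem_insert_of_mem _
      (Set.mem_singleton_iff.mpr (sym2_val_eq' (Set.mem_singleton_iff.mp hmem))))
  have hK2b : ∀ a b : ↥S2, K2.Adj a b → D.Adj ↑a ↑b := by
    intro a b hab
    rw [hK2def] at hab
    have hab' := deleteEdges_adj.mp hab
    refine deleteEdges_adj.mpr ⟨hab'.1, ?_⟩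
    intro hmem
    rw [hFdef] at hmem
    rcases Set.mem_insert_iff.mp hmem with h | h
    · rw [hm1] at h
      rcases Sym2.eq_iff.mp h with ⟨h1, _⟩ | ⟨h1, _⟩
      · exact hdisj13 p1s a h1.symm
      · exact hdisj13 p2s a h1.symm
    · rcases Set.mem_insert_iff.mp h with h | h
      · rw [hm2] at h
        rcases Sym2.eq_iff.mp h with ⟨h1, _⟩ | ⟨h1, _⟩
        · exact hdisj13 q1s a h1.symm
        · exact hdisj13 q2s a h1.symm
      · exact hab'.2 (Set.mem_singleton_iff.mpr
          (sym2_val_eq (Set.mem_singleton_iff.mp h)))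
  -- crossing facts
  have hcross1 : ∀ a b : V, D.Adj a b → a ∉ S1 → b ∈ S1 → b = u1 ∨ b = u2 := by
    intro a b hab ha hb
    have hGab : G.Adj b a := (deleteEdges_adj.mp hab).1.symm
    rcases hcrossG b a hb (memS2 a ha) hGab with h | h
    · rcases Sym2.eq_iff.mp h with ⟨h1, _⟩ | ⟨_, h2⟩
      · exact Or.inl h1
      · exact absurd (by rw [h2]; exact hu1) ha
    · rcases Sym2.eq_iff.mp h with ⟨h1, _⟩ | ⟨_, h2⟩
      · exact Or.inr h1
      · exact absurd (by rw [h2]; exact hu2) ha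
  have hcross2 : ∀ a b : V, D.Adj a b → a ∉ S2 → b ∈ S2 → b = v1 ∨ b = v2 := by
    intro a b hab ha hb
    have hGab : G.Adj a b := (deleteEdges_adj.mp hab).1
    rcases hcrossG a b (memS1 a ha) hb hGab with h | h
    · rcases Sym2.eq_iff.mp h with ⟨_, h2⟩ | ⟨h1, _⟩
      · exact Or.inl h2
      · exact absurd (by rw [h1]; exact hv1) ha
    · rcases Sym2.eq_iff.mp h with ⟨_, h2⟩ | ⟨h1, _⟩
      · exact Or.inr h2
      · exact absurd (by rw [h1]; exact hv2) ha
  have hf3F : f3.map Subtype.val ∈ F := by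
    rw [hFdef]; exact Set.mem_insert_of_mem _ (Set.mem_insert_of_mem _ rfl)
  have hf1F : f1.map Subtype.val ∈ F := by rw [hFdef]; exact Set.mem_insert _ _
  have hf2F : f2.map Subtype.val ∈ F := by
    rw [hFdef]; exact Set.mem_insert_of_mem _ (Set.mem_insert _ _)
  have hT12 : ({f1.map Subtype.val, f2.map Subtype.val} : Set (Sym2 V)) ⊂ F := by
    constructor
    · intro x hx
      rcases Set.mem_insert_iff.mp hx with h | h
      · rw [h]; exact hf1F
      · rw [Set.mem_singleton_iff.mp h]; exact hf2F
    · intro hsup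
      rcases Set.mem_insert_iff.mp (hsup hf3F) with h | h
      · exact hne13 h.symm
      · exact hne23 (Set.mem_singleton_iff.mp h).symm
  have hT3 : ({f3.map Subtype.val} : Set (Sym2 V)) ⊂ F := by
    constructor
    · intro x hx
      rw [Set.mem_singleton_iff.mp hx]; exact hf3F
    · intro hsup
      exact hne13 (Set.mem_singleton_iff.mp (hsup hf1F))
  have hTout1 : ∀ e ∈ F, e ∉ ({f1.map Subtype.val, f2.map Subtype.val} : Set (Sym2 V)) →
      ∀ c ∈ e, c ∉ S1 := by
    intro e heF heT c hce hcS
    rw [hFdef] at heF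
    rcases Set.mem_insert_iff.mp heF with h | h
    · exact heT (Set.mem_insert_iff.mpr (Or.inl h))
    · rcases Set.mem_insert_iff.mp h with h | h
      · exact heT (Set.mem_insert_of_mem _ h)
      · rw [Set.mem_singleton_iff.mp h, hm3] at hce
        rcases Sym2.mem_iff.mp hce with h1 | h1
        · exact hdisjf c hcS (by rw [h1]; exact a3s.2)
        · exact hdisjf c hcS (by rw [h1]; exact b3s.2)
  have hTout2 : ∀ e ∈ F, e ∉ ({f3.map Subtype.val} : Set (Sym2 V)) →
      ∀ c ∈ e, c ∉ S2 := by
    intro e heF heT c hce hcS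
    rw [hFdef] at heF
    rcases Set.mem_insert_iff.mp heF with h | h
    · rw [h, hm1] at hce
      rcases Sym2.mem_iff.mp hce with h1 | h1
      · exact hdisjf c (by rw [h1]; exact p1s.2) hcS
      · exact hdisjf c (by rw [h1]; exact p2s.2) hcS
    · rcases Set.mem_insert_iff.mp h with h | h
      · rw [h, hm2] at hce
        rcases Sym2.mem_iff.mp hce with h1 | h1
        · exact hdisjf c (by rw [h1]; exact q1s.2) hcS
        · exact hdisjf c (by rw [h1]; exact q2s.2) hcS
      · exact heT h
  -- the gateway lemmas
  have LC1 : ∀ z : ↥S1, K1.Reachable z ⟨u1, hu1⟩ ∨ K1.Reachable z ⟨u2, hu2⟩ :=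
    gateway G F {f1.map Subtype.val, f2.map Subtype.val}
      (hmin _ hT12 (fun e he => hFsub (hT12.1 he))) S1 K1 hK1a hK1b
      ⟨u1, hu1⟩ ⟨u2, hu2⟩ hcross1 hTout1 p1s p2s N1
  have LC2 : ∀ z : ↥S2, K2.Reachable z ⟨v1, hv1⟩ ∨ K2.Reachable z ⟨v2, hv2⟩ :=
    gateway G F {f3.map Subtype.val}
      (hmin _ hT3 (fun e he => hFsub (hT3.1 he))) S2 K2 hK2a hK2b
      ⟨v1, hv1⟩ ⟨v2, hv2⟩ hcross2 hTout2 a3s b3s N3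
  -- lifts of K-reachability to D
  have liftK1 : ∀ a b : ↥S1, K1.Reachable a b → D.Reachable ↑a ↑b := fun a b h =>
    reach_transfer Subtype.val (fun a b hab => (hK1b a b hab).reachable) h
  have liftK2 : ∀ a b : ↥S2, K2.Reachable a b → D.Reachable ↑a ↑b := fun a b h =>
    reach_transfer Subtype.val (fun a b hab => (hK2b a b hab).reachable) h
  have nK1p : ¬ K1.Reachable p1s p2s := fun h => N1 (liftK1 _ _ h)
  have nK1q : ¬ K1.Reachable q1s q2s := fun h => N2 (liftK1 _ _ h)
  have nK2 : ¬ K2.Reachable a3s b3s := fun h => N3 (liftK2 _ _ h)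
  -- small distinctness facts
  have huu_ne : (⟨u1, hu1⟩ : ↥S1) ≠ ⟨u2, hu2⟩ := fun h => huu (congrArg Subtype.val h)
  have hvv_ne : (⟨v1, hv1⟩ : ↥S2) ≠ ⟨v2, hv2⟩ := fun h => hvv (congrArg Subtype.val h)
  have hnoeu : ∀ a b : ↥S1, G.Adj ↑a ↑b → s(a, b) ≠ eu := by
    intro a b hab h
    rw [heu] at h
    rcases Sym2.eq_iff.mp h with ⟨h1, h2⟩ | ⟨h1, h2⟩ <;> rw [h1, h2] at hab
    · exact hnadj1 hab
    · exact hnadj1 hab.symm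
  have hnoev : ∀ a b : ↥S2, G.Adj ↑a ↑b → s(a, b) ≠ ev := by
    intro a b hab h
    rw [hev] at h
    rcases Sym2.eq_iff.mp h with ⟨h1, h2⟩ | ⟨h1, h2⟩ <;> rw [h1, h2] at hab
    · exact hnadj2 hab
    · exact hnadj2 hab.symm
  have hf1_ne_eu : f1 ≠ eu := by rw [hf1r]; exact hnoeu p1s p2s hpG
  have hf2_ne_eu : f2 ≠ eu := by rw [hf2r]; exact hnoeu q1s q2s hqG
  have hf3_ne_ev : f3 ≠ ev := by rw [hf3r]; exact hnoev a3s b3s haG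
  have hf1_ne_f2 : f1 ≠ f2 := fun h => hne12 (by rw [h])
  -- the five connectivity facts
  have c2f3 : ((G.induce S2 ⊔ fromEdgeSet {ev}).deleteEdges {f3}).Connected := by
    rw [connected_iff]
    refine ⟨assemble_conn K2 _ ⟨v1, hv1⟩ ⟨v2, hv2⟩ ?_ ?_ LC2, ⟨⟨v1, hv1⟩⟩⟩
    · intro a b hab
      rw [hK2def] at hab
      have hab' := deleteEdges_adj.mp hab
      exact deleteEdges_adj.mpr ⟨(sup_adj _ _ _ _).mpr (Or.inl hab'.1), hab'.2⟩
    · refine Adj.reachable (deleteEdges_adj.mpr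
        ⟨(sup_adj _ _ _ _).mpr (Or.inr ((fromEdgeSet_adj _).mpr ⟨rfl, hvv_ne⟩)), ?_⟩)
      intro hx
      exact hf3_ne_ev (Set.mem_singleton_iff.mp hx).symm
  have c2ev : ((G.induce S2 ⊔ fromEdgeSet {ev}).deleteEdges {ev}).Connected := by
    rw [connected_iff]
    have hKB : ∀ a b : ↥S2, K2.Adj a b →
        ((G.induce S2 ⊔ fromEdgeSet {ev}).deleteEdges {ev}).Adj a b := by
      intro a b hab
      rw [hK2def] at hab
      have hab' := deleteEdges_adj.mp hab
      refine deleteEdges_adj.mpr ⟨(sup_adj _ _ _ _).mpr (Or.inl hab'.1), ?_⟩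
      intro hx
      exact hnoev a b hab'.1 (Set.mem_singleton_iff.mp hx)
    have hBf3 : ((G.induce S2 ⊔ fromEdgeSet {ev}).deleteEdges {ev}).Adj a3s b3s := by
      refine deleteEdges_adj.mpr ⟨(sup_adj _ _ _ _).mpr (Or.inl haG), ?_⟩
      intro hx
      exact hnoev a3s b3s haG (Set.mem_singleton_iff.mp hx)
    exact ⟨assemble_conn K2 _ ⟨v1, hv1⟩ ⟨v2, hv2⟩ hKB
      (hub_conn K2 _ ⟨v1, hv1⟩ ⟨v2, hv2⟩ a3s b3s hKB hBf3 nK2 LC2) LC2, ⟨⟨v1, hv1⟩⟩⟩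
  have c1f12 : ((G.induce S1 ⊔ fromEdgeSet {eu}).deleteEdges {f1, f2}).Connected := by
    rw [connected_iff]
    refine ⟨assemble_conn K1 _ ⟨u1, hu1⟩ ⟨u2, hu2⟩ ?_ ?_ LC1, ⟨⟨u1, hu1⟩⟩⟩
    · intro a b hab
      rw [hK1def] at hab
      have hab' := deleteEdges_adj.mp hab
      exact deleteEdges_adj.mpr ⟨(sup_adj _ _ _ _).mpr (Or.inl hab'.1), hab'.2⟩
    · refine Adj.reachable (deleteEdges_adj.mpr
        ⟨(sup_adj _ _ _ _).mpr (Or.inr ((fromEdgeSet_adj _).mpr ⟨rfl, huu_ne⟩)), ?_⟩)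
      intro hx
      rcases Set.mem_insert_iff.mp hx with h | h
      · exact hf1_ne_eu h.symm
      · exact hf2_ne_eu (Set.mem_singleton_iff.mp h).symm
  have c1f1eu : ((G.induce S1 ⊔ fromEdgeSet {eu}).deleteEdges {f1, eu}).Connected := by
    rw [connected_iff]
    have hKB : ∀ a b : ↥S1, K1.Adj a b →
        ((G.induce S1 ⊔ fromEdgeSet {eu}).deleteEdges {f1, eu}).Adj a b := by
      intro a b hab
      rw [hK1def] at hab
      have hab' := deleteEdges_adj.mp hab
      refine deleteEdges_adj.mpr ⟨(sup_adj _ _ _ _).mpr (Or.inl hab'.1), ?_⟩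
      intro hx
      rcases Set.mem_insert_iff.mp hx with h | h
      · exact hab'.2 (Set.mem_insert_iff.mpr (Or.inl h))
      · exact hnoeu a b hab'.1 (Set.mem_singleton_iff.mp h)
    have hBf2 : ((G.induce S1 ⊔ fromEdgeSet {eu}).deleteEdges {f1, eu}).Adj q1s q2s := by
      refine deleteEdges_adj.mpr ⟨(sup_adj _ _ _ _).mpr (Or.inl hqG), ?_⟩
      intro hx
      rcases Set.mem_insert_iff.mp hx with h | h
      · exact hf1_ne_f2 (h.symm.trans hf2r.symm)
      · exact hnoeu q1s q2s hqG (Set.mem_singleton_iff.mp h)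
    exact ⟨assemble_conn K1 _ ⟨u1, hu1⟩ ⟨u2, hu2⟩ hKB
      (hub_conn K1 _ ⟨u1, hu1⟩ ⟨u2, hu2⟩ q1s q2s hKB hBf2 nK1q LC1) LC1, ⟨⟨u1, hu1⟩⟩⟩
  have c1f2eu : ((G.induce S1 ⊔ fromEdgeSet {eu}).deleteEdges {f2, eu}).Connected := by
    rw [connected_iff]
    have hKB : ∀ a b : ↥S1, K1.Adj a b →
        ((G.induce S1 ⊔ fromEdgeSet {eu}).deleteEdges {f2, eu}).Adj a b := by
      intro a b hab
      rw [hK1def] at hab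
      have hab' := deleteEdges_adj.mp hab
      refine deleteEdges_adj.mpr ⟨(sup_adj _ _ _ _).mpr (Or.inl hab'.1), ?_⟩
      intro hx
      rcases Set.mem_insert_iff.mp hx with h | h
      · exact hab'.2 (Set.mem_insert_of_mem _ (Set.mem_singleton_iff.mpr h))
      · exact hnoeu a b hab'.1 (Set.mem_singleton_iff.mp h)
    have hBf1 : ((G.induce S1 ⊔ fromEdgeSet {eu}).deleteEdges {f2, eu}).Adj p1s p2s := by
      refine deleteEdges_adj.mpr ⟨(sup_adj _ _ _ _).mpr (Or.inl hpG), ?_⟩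
      intro hx
      rcases Set.mem_insert_iff.mp hx with h | h
      · exact hf1_ne_f2 (hf1r.trans h)
      · exact hnoeu p1s p2s hpG (Set.mem_singleton_iff.mp h)
    exact ⟨assemble_conn K1 _ ⟨u1, hu1⟩ ⟨u2, hu2⟩ hKB
      (hub_conn K1 _ ⟨u1, hu1⟩ ⟨u2, hu2⟩ p1s p2s hKB hBf1 nK1p LC1) LC1, ⟨⟨u1, hu1⟩⟩⟩
  -- disconnectedness
  have discA : ¬ ((G.induce S2 ⊔ fromEdgeSet {ev}).deleteEdges {f3, ev}).Connected := by
    intro hc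
    apply N3
    refine reach_transfer Subtype.val ?_ (hc.preconnected a3s b3s)
    intro a b hab
    have hab' := deleteEdges_adj.mp hab
    rcases (sup_adj _ _ _ _).mp hab'.1 with h | h
    · refine (hK2b a b ?_).reachable
      rw [hK2def]
      exact deleteEdges_adj.mpr ⟨h, fun hx =>
        hab'.2 (Set.mem_insert_iff.mpr (Or.inl (Set.mem_singleton_iff.mp hx)))⟩
    · exact absurd ((fromEdgeSet_adj _).mp h).1
        (fun hx => hab'.2 (Set.mem_insert_of_mem _ hx))
  have discB : ¬ ((G.induce S1 ⊔ fromEdgeSet {eu}).deleteEdges {f1, f2, eu}).Connected := by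
    intro hc
    apply N1
    refine reach_transfer Subtype.val ?_ (hc.preconnected p1s p2s)
    intro a b hab
    have hab' := deleteEdges_adj.mp hab
    rcases (sup_adj _ _ _ _).mp hab'.1 with h | h
    · refine (hK1b a b ?_).reachable
      rw [hK1def]
      refine deleteEdges_adj.mpr ⟨h, ?_⟩
      intro hx
      rcases Set.mem_insert_iff.mp hx with h1 | h1
      · exact hab'.2 (Set.mem_insert_iff.mpr (Or.inl h1))
      · exact hab'.2 (Set.mem_insert_of_mem _ (Set.mem_insert_iff.mpr (Or.inl
          (Set.mem_singleton_iff.mp h1))))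
    · exact absurd ((fromEdgeSet_adj _).mp h).1
        (fun hx => hab'.2 (Set.mem_insert_of_mem _ (Set.mem_insert_of_mem _ hx)))
  -- cardinalities
  have ncardA : ({f3, ev} : Set (Sym2 ↥S2)).ncard = 2 := Set.ncard_pair hf3_ne_ev
  have hf1_notin : f1 ∉ ({f2, eu} : Set (Sym2 ↥S1)) := by
    intro h
    rcases Set.mem_insert_iff.mp h with h1 | h1
    · exact hf1_ne_f2 h1
    · exact hf1_ne_eu (Set.mem_singleton_iff.mp h1)
  have ncardB : ({f1, f2, eu} : Set (Sym2 ↥S1)).ncard = 3 := by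
    rw [Set.ncard_insert_of_notMem hf1_notin, Set.ncard_pair hf2_ne_eu]
  -- edge subsets
  have subA : ({f3, ev} : Set (Sym2 ↥S2)) ⊆ (G.induce S2 ⊔ fromEdgeSet {ev}).edgeSet := by
    intro e he
    rcases Set.mem_insert_iff.mp he with h | h
    · rw [h, edgeSet_sup]; exact Set.mem_union_left _ hf3
    · rw [Set.mem_singleton_iff.mp h, hev, mem_edgeSet]
      exact (sup_adj _ _ _ _).mpr (Or.inr ((fromEdgeSet_adj _).mpr ⟨rfl, hvv_ne⟩))
  have subB : ({f1, f2, eu} : Set (Sym2 ↥S1)) ⊆ (G.induce S1 ⊔ fromEdgeSet {eu}).edgeSet := by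
    intro e he
    rcases Set.mem_insert_iff.mp he with h | h
    · rw [h, edgeSet_sup]; exact Set.mem_union_left _ hf1
    · rcases Set.mem_insert_iff.mp h with h1 | h1
      · rw [h1, edgeSet_sup]; exact Set.mem_union_left _ hf2
      · rw [Set.mem_singleton_iff.mp h1, heu, mem_edgeSet]
        exact (sup_adj _ _ _ _).mpr (Or.inr ((fromEdgeSet_adj _).mpr ⟨rfl, huu_ne⟩))
  -- minimality
  have minA : ∀ T : Set (Sym2 ↥S2), T ⊂ {f3, ev} →
      ¬ IsDisconnectingSet (G.induce S2 ⊔ fromEdgeSet {ev}) T := by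
    intro T hT hdis
    obtain ⟨_, hnc⟩ := hdis
    apply hnc
    obtain ⟨m, hmS, hmT⟩ := Set.exists_of_ssubset hT
    rcases Set.mem_insert_iff.mp hmS with h | h
    · have hsub : T ⊆ {ev} := by
        intro x hx
        rcases Set.mem_insert_iff.mp (hT.1 hx) with h1 | h1
        · exact absurd (h1 ▸ hx) (h ▸ hmT)
        · exact h1
      exact Connected.mono (deleteEdges_anti hsub) c2ev
    · have hsub : T ⊆ {f3} := by
        intro x hx
        rcases Set.mem_insert_iff.mp (hT.1 hx) with h1 | h1
        · exact Set.mem_singleton_iff.mpr h1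
        · exact absurd ((Set.mem_singleton_iff.mp h1) ▸ hx)
            ((Set.mem_singleton_iff.mp h) ▸ hmT)
      exact Connected.mono (deleteEdges_anti hsub) c2f3
  have minB : ∀ T : Set (Sym2 ↥S1), T ⊂ {f1, f2, eu} →
      ¬ IsDisconnectingSet (G.induce S1 ⊔ fromEdgeSet {eu}) T := by
    intro T hT hdis
    obtain ⟨_, hnc⟩ := hdis
    apply hnc
    obtain ⟨m, hmS, hmT⟩ := Set.exists_of_ssubset hT
    rcases Set.mem_insert_iff.mp hmS with h | h
    · have hsub : T ⊆ {f2, eu} := by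
        intro x hx
        rcases Set.mem_insert_iff.mp (hT.1 hx) with h1 | h1
        · exact absurd (h1 ▸ hx) (h ▸ hmT)
        · exact h1
      exact Connected.mono (deleteEdges_anti hsub) c1f2eu
    · rcases Set.mem_insert_iff.mp h with h | h
      · have hsub : T ⊆ {f1, eu} := by
          intro x hx
          rcases Set.mem_insert_iff.mp (hT.1 hx) with h1 | h1
          · exact Set.mem_insert_iff.mpr (Or.inl h1)
          · rcases Set.mem_insert_iff.mp h1 with h2 | h2
            · exact absurd (h2 ▸ hx) (h ▸ hmT)
            · exact Set.mem_insert_of_mem _ h2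
        exact Connected.mono (deleteEdges_anti hsub) c1f1eu
      · have hsub : T ⊆ {f1, f2} := by
          intro x hx
          rcases Set.mem_insert_iff.mp (hT.1 hx) with h1 | h1
          · exact Set.mem_insert_iff.mpr (Or.inl h1)
          · rcases Set.mem_insert_iff.mp h1 with h2 | h2
            · exact Set.mem_insert_of_mem _ (Set.mem_singleton_iff.mpr h2)
            · exact absurd ((Set.mem_singleton_iff.mp h2) ▸ hx)
                ((Set.mem_singleton_iff.mp h) ▸ hmT)
        exact Connected.mono (deleteEdges_anti hsub) c1f12
  exact ⟨⟨ncardA, ⟨subA, discA⟩, minA⟩, ⟨ncardB, ⟨subB, discB⟩, minB⟩⟩
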